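/- A binary word f is tilde-isometric if and only if its reverse f^rev is tilde-isometric. -/

import Mathlib

/-- One tilde edit step: a single-bit replacement or a swap of two adjacent distinct symbols. -/
def tildeStep (u v : List Bool) : Prop :=
  (∃ i, i < u.length ∧ v = u.set i (!(u.getD i false))) ∨
  (∃ i, i + 1 < u.length ∧ u.getD i false ≠ u.getD (i+1) false ∧
    v = (u.set i (u.getD (i+1) false)).set (i+1) (u.getD i false))

/-- A chain of `d` tilde steps from `u` to `v`. -/
def tildeChain : ℕ → List Bool → List Bool → Prop
  | 0, u, v => u = v
  | d+1, u, v => ∃ w, tildeStep u w ∧ tildeChain d w v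

/-- The tilde-distance: minimum number of replacements and adjacent swaps. -/
noncomputable def tildeDist (u v : List Bool) : ℕ :=
  sInf {d | tildeChain d u v}

/-- `f` occurs as a contiguous factor of `w`. -/
def isFactor (f w : List Bool) : Prop := ∃ s t, w = s ++ f ++ t

/-- `w` is `f`-free. -/
def fFree (f w : List Bool) : Prop := ¬ isFactor f w

/-- A chain of `d` tilde steps from `u` to `v` all of whose intermediate words are `f`-free. -/
def freeTildeChain (f : List Bool) : ℕ → List Bool → List Bool → Prop
  | 0, u, v => u = v
  | d+1, u, v => ∃ w, tildeStep u w ∧ fFree f w ∧ freeTildeChain f d w v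

/-- `f` is tilde-isometric. -/
def tildeIsometric (f : List Bool) : Prop :=
  ∀ u v : List Bool, u.length = v.length → f.length ≤ u.length →
    fFree f u → fFree f v → freeTildeChain f (tildeDist u v) u v

/-- Replacement at (0-indexed) position `i`. -/
def repl (w : List Bool) (i : ℕ) : List Bool := w.set i (!(w.getD i false))

/-- Swap of positions `i` and `i+1` (0-indexed). -/
def swap (w : List Bool) (i : ℕ) : List Bool :=
  (w.set i (w.getD (i+1) false)).set (i+1) (w.getD i false)

/-- Hamming distance between equal-length binary words. -/
def hammingDistL (u v : List Bool) : ℕ :=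
  ((List.range u.length).filter (fun i => u.getD i false != v.getD i false)).length

/-- One Hamming edit step: a single-bit replacement. -/
def hammStep (u v : List Bool) : Prop :=
  ∃ i, i < u.length ∧ v = u.set i (!(u.getD i false))

/-- A chain of `d` Hamming steps from `u` to `v`, all intermediate words `f`-free. -/
def freeHammChain (f : List Bool) : ℕ → List Bool → List Bool → Prop
  | 0, u, v => u = v
  | d+1, u, v => ∃ w, hammStep u w ∧ fFree f w ∧ freeHammChain f d w v

/-- `f` is Hamming-isometric. -/
def hammIsometric (f : List Bool) : Prop :=
  ∀ u v : List Bool, u.length = v.length → f.length ≤ u.length →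
    fFree f u → fFree f v → freeHammChain f (hammingDistL u v) u v


lemma set_reverse (l : List Bool) (i : ℕ) (x : Bool) (h : i < l.length) :
    (l.set i x).reverse = l.reverse.set (l.length - 1 - i) x := by
  apply List.ext_getElem
  · simp
  · intro j h1 h2
    simp only [List.length_reverse, List.length_set] at h1 h2
    rw [List.getElem_reverse, List.getElem_set, List.getElem_set, List.getElem_reverse]
    simp only [List.length_set]
    split <;> split <;> first | rfl | omega

lemma getD_reverse (l : List Bool) (i : ℕ) (h : i < l.length) :
    l.reverse.getD i false = l.getD (l.length - 1 - i) false := by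
  rw [List.getD_eq_getElem _ _ (by simpa using h), List.getD_eq_getElem _ _ (by omega),
    List.getElem_reverse]

lemma tildeStep_reverse {u v : List Bool} (h : tildeStep u v) :
    tildeStep u.reverse v.reverse := by
  rcases h with ⟨i, hi, hv⟩ | ⟨i, hi, hne, hv⟩
  · refine Or.inl ⟨u.length - 1 - i, by simp; omega, ?_⟩
    rw [getD_reverse u _ (by omega), show u.length - 1 - (u.length - 1 - i) = i from by omega,
      hv, set_reverse _ _ _ hi]
  · refine Or.inr ⟨u.length - 2 - i, by simp; omega, ?_, ?_⟩
    · rw [getD_reverse u _ (by omega), getD_reverse u _ (by omega)]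
      rw [show u.length - 1 - (u.length - 2 - i) = i + 1 from by omega,
        show u.length - 1 - (u.length - 2 - i + 1) = i from by omega]
      exact hne.symm
    · rw [getD_reverse u _ (by omega), getD_reverse u _ (by omega),
        show u.length - 1 - (u.length - 2 - i) = i + 1 from by omega,
        show u.length - 1 - (u.length - 2 - i + 1) = i from by omega]
      rw [hv, set_reverse _ _ _ (by simp; omega), List.length_set,
        set_reverse _ _ _ (by omega),
        show u.length - 1 - (i+1) = u.length - 2 - i from by omega,
        List.set_comm _ _ (by omega),
        show u.length - 2 - i + 1 = u.length - 1 - i from by omega]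

lemma tildeChain_reverse {d : ℕ} {u v : List Bool} (h : tildeChain d u v) :
    tildeChain d u.reverse v.reverse := by
  induction d generalizing u with
  | zero => simp [tildeChain] at h ⊢; rw [h]
  | succ d ih =>
    obtain ⟨w, hs, hc⟩ := h
    exact ⟨w.reverse, tildeStep_reverse hs, ih hc⟩

lemma tildeDist_reverse (u v : List Bool) :
    tildeDist u.reverse v.reverse = tildeDist u v := by
  unfold tildeDist
  congr 1
  ext d
  constructor
  · intro h
    simpa using tildeChain_reverse h
  · exact tildeChain_reverse

lemma isFactor_reverse {f w : List Bool} (h : isFactor f w) :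
    isFactor f.reverse w.reverse := by
  obtain ⟨s, t, rfl⟩ := h
  exact ⟨t.reverse, s.reverse, by simp⟩

lemma fFree_reverse_iff {f w : List Bool} : fFree f.reverse w ↔ fFree f w.reverse := by
  constructor
  · intro h hf
    exact h (by simpa using isFactor_reverse hf)
  · intro h hf
    exact h (by simpa using isFactor_reverse hf)

lemma freeTildeChain_reverse {f : List Bool} {d : ℕ} {u v : List Bool}
    (h : freeTildeChain f d u v) : freeTildeChain f.reverse d u.reverse v.reverse := by
  induction d generalizing u with
  | zero => simp [freeTildeChain] at h ⊢; rw [h]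
  | succ d ih =>
    obtain ⟨w, hs, hfree, hc⟩ := h
    exact ⟨w.reverse, tildeStep_reverse hs, by rwa [fFree_reverse_iff, List.reverse_reverse],
      ih hc⟩

lemma tildeIsometric_reverse {f : List Bool} (h : tildeIsometric f) :
    tildeIsometric f.reverse := by
  intro u v hlen hflen hu hv
  have hchain := h u.reverse v.reverse (by simp [hlen]) (by simpa using hflen)
    (fFree_reverse_iff.mp hu) (fFree_reverse_iff.mp hv)
  rw [tildeDist_reverse] at hchain
  simpa using freeTildeChain_reverse hchain

theorem stmt3 (f : List Bool) :
    tildeIsometric f ↔ tildeIsometric f.reverse := by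
  constructor
  · exact tildeIsometric_reverse
  · intro h
    simpa using tildeIsometric_reverse h
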